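/- Let p be an odd prime, X a closed topological manifold of dimension n, E and F real oriented vector bundles over X, and L : E → F an orientation preserving bundle morphism. If the k-th Wu classes differ, q_k(E) ≠ q_k(F) ∈ H^{2(p−1)k}(X;ℤ_p), then the covering dimension of Σ(L) is at least n − 2(p−1)k; in particular, if q₁(E) ≠ q₁(F) then dim Σ(L) ≥ n − 2(p−1). -/

import Mathlib

set_option autoImplicit false

noncomputable section

open Bundle Set Module

/-- `HasCovDimLE Y m` : every finite open cover of `Y` has a finite open refinement in which
no point is included in more than `m + 1` elements. -/
def HasCovDimLE (Y : Type) [TopologicalSpace Y] (m : ℕ) : Prop :=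
  ∀ U : Finset (Set Y), (∀ u ∈ U, IsOpen u) → ⋃₀ (U : Set (Set Y)) = Set.univ →
    ∃ V : Finset (Set Y), (∀ v ∈ V, IsOpen v) ∧ ⋃₀ (V : Set (Set Y)) = Set.univ ∧
      (∀ v ∈ V, ∃ u ∈ U, v ⊆ u) ∧
      ∀ y : Y, {v ∈ (V : Set (Set Y)) | y ∈ v}.ncard ≤ m + 1

/-- The covering dimension of a topological space, as an element of `ℕ∞` (`⊤` if no finite
`m` works). -/
def covDim (Y : Type) [TopologicalSpace Y] : ℕ∞ :=
  sInf {d : ℕ∞ | ∃ m : ℕ, d = (m : ℕ∞) ∧ HasCovDimLE Y m}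

/-- The underlying graded groups of: relative singular homology `H_k(Y, A; R)` (with
`H_k(Y; R) = H_k(Y, ∅; R)`), singular cohomology `H^k(Y; G)`, Čech cohomology `Ȟ^k(Y; R)`
and the `Ext`-term `Ext¹_R(H_{k-1}(Y; R), G)` of the universal coefficient theorem. -/
structure CohomologyData (R : Type) [CommRing R] (G : Type) [AddCommGroup G] [Module R G] where
  /-- relative singular homology `H_k(Y, A; R)` -/
  Hrel : ∀ (Y : Type) [TopologicalSpace Y], Set Y → ℤ → Type
  instHrelAdd : ∀ (Y : Type) [TopologicalSpace Y] (A : Set Y) (k : ℤ), AddCommGroup (Hrel Y A k)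
  instHrelMod : ∀ (Y : Type) [TopologicalSpace Y] (A : Set Y) (k : ℤ), Module R (Hrel Y A k)
  /-- singular cohomology `H^k(Y; G)` -/
  Hco : ∀ (Y : Type) [TopologicalSpace Y], ℤ → Type
  instHcoAdd : ∀ (Y : Type) [TopologicalSpace Y] (k : ℤ), AddCommGroup (Hco Y k)
  /-- Čech cohomology `Ȟ^k(Y; R)` -/
  Hcech : ∀ (Y : Type) [TopologicalSpace Y], ℤ → Type
  instHcechAdd : ∀ (Y : Type) [TopologicalSpace Y] (k : ℤ), AddCommGroup (Hcech Y k)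
  /-- the group `Ext¹_R(H_{k-1}(Y; R), G)` appearing in the universal coefficient theorem -/
  ExtUCT : ∀ (Y : Type) [TopologicalSpace Y], ℤ → Type
  instExtAdd : ∀ (Y : Type) [TopologicalSpace Y] (k : ℤ), AddCommGroup (ExtUCT Y k)

attribute [instance] CohomologyData.instHrelAdd CohomologyData.instHrelMod
  CohomologyData.instHcoAdd CohomologyData.instHcechAdd CohomologyData.instExtAdd

/-- An axiomatization of the package consisting of singular homology of pairs (with
coefficients in a PID `R`), singular cohomology (with coefficients in an `R`-module `G`) and
Čech cohomology (with coefficients in `R`), together with: functoriality, the Kronecker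
pairing `α` (written `pair`, `α^k(η)(ξ) = ⟨η, ξ⟩`) and its naturality, the universal
coefficient exact sequence
`0 → Ext¹_R(H_{k-1}(Y;R), G) →^{β^k} H^k(Y;G) →^{α^k} Hom_R(H_k(Y;R), G) → 0`
(exactness at `H^k` and vanishing of the `Ext`-term on free homology), the homology long
exact sequence of a pair (the part `im j_* = ker π_*`), and the fact that non-vanishing of
`Ȟ^m` of a compact Hausdorff space forces its covering dimension to be at least `m`.
All of these are classical facts about the (co)homology of topological spaces; they are the
only properties used in the paper. -/
structure Theory (R : Type) [CommRing R] [IsDomain R] [IsPrincipalIdealRing R]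
    (G : Type) [AddCommGroup G] [Module R G] extends CohomologyData R G where
  /-- functoriality of relative homology for maps of pairs -/
  hmap : ∀ {Y Z : Type} [TopologicalSpace Y] [TopologicalSpace Z]
    (f : C(Y, Z)) {A : Set Y} {B : Set Z}, Set.MapsTo f A B →
    ∀ k : ℤ, Hrel Y A k →ₗ[R] Hrel Z B k
  /-- contravariant functoriality of singular cohomology -/
  cmap : ∀ {Y Z : Type} [TopologicalSpace Y] [TopologicalSpace Z]
    (f : C(Y, Z)) (k : ℤ), Hco Z k →+ Hco Y k
  cmap_id : ∀ (Y : Type) [TopologicalSpace Y] (k : ℤ) (x : Hco Y k),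
    cmap (ContinuousMap.id Y) k x = x
  /-- contravariant functoriality of Čech cohomology -/
  ccmap : ∀ {Y Z : Type} [TopologicalSpace Y] [TopologicalSpace Z]
    (f : C(Y, Z)) (k : ℤ), Hcech Z k →+ Hcech Y k
  /-- the Kronecker pairing `α^k : H^k(Y;G) → Hom_R(H_k(Y;R), G)`, `α^k(η)(ξ) = ⟨η, ξ⟩` -/
  pair : ∀ (Y : Type) [TopologicalSpace Y] (k : ℤ),
    Hco Y k →+ (Hrel Y (∅ : Set Y) k →ₗ[R] G)
  /-- naturality of the Kronecker pairing: `⟨f^*η, ξ⟩ = ⟨η, f_*ξ⟩` -/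
  pair_natural : ∀ {Y Z : Type} [TopologicalSpace Y] [TopologicalSpace Z] (f : C(Y, Z)) (k : ℤ)
    (η : Hco Z k) (ξ : Hrel Y (∅ : Set Y) k),
    pair Y k (cmap f k η) ξ = pair Z k η (hmap f (Set.mapsTo_empty _ _) k ξ)
  /-- the map `β^k : Ext¹_R(H_{k-1}(Y;R), G) → H^k(Y;G)` of the universal coefficient
  theorem -/
  betaMap : ∀ (Y : Type) [TopologicalSpace Y] (k : ℤ), ExtUCT Y k →+ Hco Y k
  /-- exactness of the universal coefficient sequence at `H^k(Y;G)`: `ker α^k = im β^k` -/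
  uct_exact : ∀ (Y : Type) [TopologicalSpace Y] (k : ℤ) (x : Hco Y k),
    pair Y k x = 0 ↔ x ∈ Set.range (betaMap Y k)
  /-- `Ext¹_R(H_{k-1}(Y;R), G)` vanishes if `H_{k-1}(Y;R)` is a free `R`-module -/
  uct_free : ∀ (Y : Type) [TopologicalSpace Y] (k : ℤ),
    Module.Free R (Hrel Y (∅ : Set Y) (k - 1)) → ∀ z : ExtUCT Y k, betaMap Y k z = 0
  /-- exactness of the long exact homology sequence of the pair `(X, X ∖ A)` at `H_k(X)`:
  `π_* ξ = 0` iff `ξ` comes from `H_k(X ∖ A)` -/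
  les_exact : ∀ (X : Type) [TopologicalSpace X] (A : Set X) (k : ℤ)
    (ξ : Hrel X (∅ : Set X) k),
    hmap (ContinuousMap.id X) (Set.mapsTo_empty _ _) k ξ = (0 : Hrel X Aᶜ k) ↔
      ∃ ζ : Hrel (↥(Aᶜ)) (∅ : Set ↥(Aᶜ)) k,
        hmap (⟨Subtype.val, continuous_subtype_val⟩ : C(↥(Aᶜ), X))
          (Set.mapsTo_empty _ _) k ζ = ξ
  /-- if the Čech cohomology `Ȟ^m(Y;R)` of a compact Hausdorff space is non-trivial
  then its covering dimension is at least `m` -/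
  dim_cech : ∀ (Y : Type) [TopologicalSpace Y] [CompactSpace Y] [T2Space Y] (m : ℕ),
    (∃ x : Hcech Y (m : ℤ), x ≠ 0) → (m : ℕ∞) ≤ covDim Y

/-- `X` is `R`-orientable (with respect to the homology theory `T`) if there is a compatible
continuous choice `o(λ)` of generators of the local homology modules
`H_n(X, X ∖ {λ}; R) ≅ R`: i.e. an open cover `{U_i}` of `X` and classes
`μ_i ∈ H_n(X, X ∖ U_i; R)` restricting to `o(λ)` for every `λ ∈ U_i`. -/
def ROrientable {R : Type} [CommRing R] [IsDomain R] [IsPrincipalIdealRing R]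
    {G : Type} [AddCommGroup G] [Module R G] (T : Theory R G)
    (n : ℕ) (X : Type) [TopologicalSpace X] : Prop :=
  ∃ o : ∀ x : X, T.Hrel X ({x}ᶜ) (n : ℤ),
    (∀ x, Submodule.span R {o x} = ⊤) ∧
    ∃ (ι : Type) (U : ι → Set X), (∀ i, IsOpen (U i)) ∧ (∀ x, ∃ i, x ∈ U i) ∧
      ∃ μ : ∀ i, T.Hrel X ((U i)ᶜ) (n : ℤ),
        ∀ (i) (x) (hx : x ∈ U i),
          T.hmap (ContinuousMap.id X)
            ((Set.mapsTo_id _).mono_right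
              (Set.compl_subset_compl.mpr (Set.singleton_subset_iff.mpr hx)))
            (n : ℤ) (μ i) = o x

/-- The full package: the (co)homology theories together with Poincaré–Lefschetz duality for
closed `R`-orientable topological `n`-manifolds (in the form of [Bredon, Cor. VI.8.4]: for a
closed subset `A ⊆ X` there is a commutative square consisting of the duality isomorphisms
`Ȟ^{n-k}(X;R) ≅ H_k(X;R)` and `Ȟ^{n-k}(A;R) ≅ H_k(X, X∖A;R)`, the restriction
`i^* : Ȟ^{n-k}(X;R) → Ȟ^{n-k}(A;R)` and `π_* : H_k(X;R) → H_k(X, X∖A;R)`), and the fact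
that every closed topological manifold is `R`-orientable when `2 = 0` in `R`. -/
structure GoodTheory (R : Type) [CommRing R] [IsDomain R] [IsPrincipalIdealRing R]
    (G : Type) [AddCommGroup G] [Module R G] extends Theory R G where
  /-- Poincaré–Lefschetz duality -/
  pd : ∀ (n : ℕ) (X : Type) [TopologicalSpace X] [T2Space X]
    [ChartedSpace (EuclideanSpace ℝ (Fin n)) X] [CompactSpace X],
    ROrientable toTheory n X →
    ∀ (k : ℤ) (A : Set X), IsClosed A →
      ∃ (pdX : Hcech X ((n : ℤ) - k) ≃+ Hrel X (∅ : Set X) k)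
        (pdA : Hcech (↥A) ((n : ℤ) - k) ≃+ Hrel X Aᶜ k),
        ∀ η : Hcech X ((n : ℤ) - k),
          pdA (ccmap (⟨Subtype.val, continuous_subtype_val⟩ : C(↥A, X)) ((n : ℤ) - k) η) =
          hmap (ContinuousMap.id X) (Set.mapsTo_empty _ _) k (pdX η)
  /-- every closed topological manifold is `R`-orientable if `2 = 0` in `R` -/
  orient_two : (2 : R) = 0 → ∀ (n : ℕ) (X : Type) [TopologicalSpace X] [T2Space X]
    [ChartedSpace (EuclideanSpace ℝ (Fin n)) X] [CompactSpace X],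
    ROrientable toTheory n X

/-- A (finite rank) vector bundle over the base `Y` with scalar field `𝕜`, packaged as a
structure: a model fibre `F` and a family of fibres `E y` together with all the data making
it a topological vector bundle. -/
structure VB (𝕜 : Type) [NontriviallyNormedField 𝕜] (Y : Type) [TopologicalSpace Y] :
    Type 1 where
  /-- the model fibre -/
  F : Type
  [nF : NormedAddCommGroup F]
  [sF : NormedSpace 𝕜 F]
  [fdF : FiniteDimensional 𝕜 F]
  /-- the fibres -/
  E : Y → Type
  [aE : ∀ y, AddCommGroup (E y)]
  [mE : ∀ y, Module 𝕜 (E y)]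
  [tE : ∀ y, TopologicalSpace (E y)]
  [tT : TopologicalSpace (Bundle.TotalSpace F E)]
  [fb : FiberBundle F E]
  [vb : VectorBundle 𝕜 F E]

attribute [instance] VB.nF VB.sF VB.fdF VB.aE VB.mE VB.tE VB.tT VB.fb VB.vb

/-- A morphism of vector bundles over `X`: a fibrewise (continuous) linear map which is
continuous as a map of total spaces. -/
def IsBundleMorphism {𝕜 : Type} [NontriviallyNormedField 𝕜] {X : Type} [TopologicalSpace X]
    (V W : VB 𝕜 X) (L : ∀ x, V.E x →L[𝕜] W.E x) : Prop :=
  Continuous fun p : Bundle.TotalSpace V.F V.E =>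
    (Bundle.TotalSpace.mk p.1 (L p.1 p.2) : Bundle.TotalSpace W.F W.E)

/-- The singular set `Σ(L) = {λ ∈ X | L_λ ∉ GL(E_λ, F_λ)}` of a bundle morphism `L`:
the set of points of the base over which `L` is not a linear isomorphism of fibres. -/
def singularSet {𝕜 : Type} [NontriviallyNormedField 𝕜] {X : Type} [TopologicalSpace X]
    (V W : VB 𝕜 X) (L : ∀ x, V.E x →L[𝕜] W.E x) : Set X :=
  {x : X | ¬ Function.Bijective (L x)}

/-- `o` is an orientation of the real vector bundle `V` of rank `r`: a function assigning an
orientation to each fibre in such a way that near each point of the base the local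
trivialization carries the orientations of the fibres into one fixed orientation of the
model fibre. -/
def IsBundleOrientation {Y : Type} [TopologicalSpace Y] (r : ℕ) (V : VB ℝ Y)
    (o : ∀ y, Orientation ℝ (V.E y) (Fin r)) : Prop :=
  ∀ y₀ : Y, ∃ ω : Orientation ℝ V.F (Fin r),
    ∀ (y) (hy : y ∈ (trivializationAt V.F V.E y₀).baseSet),
      Orientation.map (Fin r)
        ((trivializationAt V.F V.E y₀).continuousLinearEquivAt ℝ y hy).toLinearEquiv
        (o y) = ω

/-- A real vector bundle is orientable if it admits an orientation. -/
def BundleOrientable {Y : Type} [TopologicalSpace Y] (V : VB ℝ Y) : Prop :=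
  ∃ o : ∀ y, Orientation ℝ (V.E y) (Fin (Module.finrank ℝ V.F)),
    IsBundleOrientation (Module.finrank ℝ V.F) V o

/-- An oriented real vector bundle of rank `r` over `Y`. -/
structure OVB (Y : Type) [TopologicalSpace Y] (r : ℕ) extends VB ℝ Y where
  /-- the fibrewise orientation -/
  ori : ∀ y, Orientation ℝ (E y) (Fin r)
  isOri : IsBundleOrientation r toVB ori

/-- A bundle morphism `L : E → F` between oriented bundles is orientation preserving if
`Σ(L) ≠ X` and its restriction over `X ∖ Σ(L)` carries the orientation of `E` to the
orientation of `F` on each fibre. -/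
def IsOrientPreservingMorphism {X : Type} [TopologicalSpace X] {r : ℕ}
    (V W : OVB X r) (L : ∀ x, V.E x →L[ℝ] W.E x) : Prop :=
  singularSet V.toVB W.toVB L ≠ Set.univ ∧
  ∀ (x) (hx : Function.Bijective (L x)),
    Orientation.map (Fin r)
      (LinearEquiv.ofBijective ((L x : V.E x →ₗ[ℝ] W.E x)) hx) (V.ori x) = W.ori x

/-- An `H^k(·;G)`-valued characteristic class for oriented (rank `r`) real bundles: it
assigns to every oriented bundle over a base `Y` a class `e(E) ∈ H^k(Y;G)`, such that
`e(E₁) = f^* e(E₂)` whenever a continuous map `f : Y → Z` is covered by an orientation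
preserving (fibrewise isomorphic, continuous) bundle map `E₁ → E₂`. -/
structure OrientedCharClass {R : Type} [CommRing R] [IsDomain R] [IsPrincipalIdealRing R]
    {G : Type} [AddCommGroup G] [Module R G] (T : GoodTheory R G) (r : ℕ) (k : ℤ) where
  /-- the value of the characteristic class on an oriented bundle -/
  cls : ∀ (Y : Type) [TopologicalSpace Y], OVB Y r → T.Hco Y k
  /-- naturality with respect to orientation preserving bundle maps covering continuous
  maps -/
  natural : ∀ (Y Z : Type) [TopologicalSpace Y] [TopologicalSpace Z]
    (V : OVB Y r) (W : OVB Z r) (f : C(Y, Z)) (φ : ∀ y, V.E y ≃ₗ[ℝ] W.E (f y)),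
    Continuous (fun p : Bundle.TotalSpace V.F V.E =>
      (Bundle.TotalSpace.mk (f p.1) (φ p.1 p.2) : Bundle.TotalSpace W.F W.E)) →
    (∀ y, Orientation.map (Fin r) (φ y) (V.ori y) = W.ori (f y)) →
    cls Y V = T.cmap f k (cls Z W)


section AuxPullback

/-- Pullback of a `VB` along a continuous map. -/
noncomputable def VB.pullbackVB {B B' : Type} [TopologicalSpace B] [TopologicalSpace B']
    (V : VB ℝ B) (f : C(B', B)) : VB ℝ B' where
  F := V.F
  E := (f : B' → B) *ᵖ V.E
  aE := fun y => inferInstanceAs (AddCommGroup (V.E (f y)))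
  mE := fun y => inferInstanceAs (Module ℝ (V.E (f y)))
  tE := inferInstance
  tT := inferInstance
  fb := FiberBundle.pullback f
  vb := by exact VectorBundle.pullback (F := V.F) (E := V.E) ℝ f

/-- Pullback of an oriented bundle along a continuous map. -/
noncomputable def OVB.pullbackOVB {B B' : Type} [TopologicalSpace B] [TopologicalSpace B']
    {r : ℕ} (V : OVB B r) (f : C(B', B)) : OVB B' r where
  toVB := V.toVB.pullbackVB f
  ori := fun y => by exact V.ori (f y)
  isOri := by
    intro y₀
    obtain ⟨ω, hω⟩ := V.isOri (f y₀)
    refine ⟨ω, fun y hy => ?_⟩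
    have hy' : f y ∈ (trivializationAt V.F V.E (f y₀)).baseSet := hy
    have he : (trivializationAt (V.toVB.pullbackVB f).F (V.toVB.pullbackVB f).E y₀
          |>.continuousLinearEquivAt ℝ y hy).toLinearEquiv
        = ((trivializationAt V.F V.E (f y₀)).continuousLinearEquivAt ℝ (f y) hy').toLinearEquiv :=
      LinearEquiv.ext fun v => rfl
    rw [he]
    exact hω (f y) hy'

theorem singularSet_isClosed {X : Type} [TopologicalSpace X] (V W : VB ℝ X)
    (L : ∀ x, V.E x →L[ℝ] W.E x) (hL : IsBundleMorphism V W L) :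
    IsClosed (singularSet V W L) := by
  rw [← isOpen_compl_iff, isOpen_iff_mem_nhds]
  intro x₀ hx₀
  have hbij : Function.Bijective (L x₀) := not_not.mp hx₀
  set eV := trivializationAt V.F V.E x₀ with heV
  set eW := trivializationAt W.F W.E x₀ with heW
  have hxV : x₀ ∈ eV.baseSet := mem_baseSet_trivializationAt V.F V.E x₀
  have hxW : x₀ ∈ eW.baseSet := mem_baseSet_trivializationAt W.F W.E x₀
  have hdim : finrank ℝ W.F = finrank ℝ V.F := by
    rw [← (eV.continuousLinearEquivAt ℝ x₀ hxV).toLinearEquiv.finrank_eq,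
      ← (eW.continuousLinearEquivAt ℝ x₀ hxW).toLinearEquiv.finrank_eq]
    exact (LinearEquiv.ofBijective ((L x₀ : V.E x₀ →ₗ[ℝ] W.E x₀)) hbij).finrank_eq.symm
  set dd := finrank ℝ V.F with hdd
  let bV : Basis (Fin dd) ℝ V.F := Module.finBasis ℝ V.F
  let bW : Basis (Fin dd) ℝ W.F := (Module.finBasis ℝ W.F).reindex (finCongr hdim)
  set U := eV.baseSet ∩ eW.baseSet with hUdef
  have hU : IsOpen U := eV.open_baseSet.inter eW.open_baseSet
  have hx₀U : x₀ ∈ U := ⟨hxV, hxW⟩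
  -- the local family of maps in coordinates
  set g : X → V.F → W.F := fun x v => (eW ⟨x, L x (eV.symm x v)⟩).2 with hg
  have hgx : ∀ v, ContinuousOn (fun x => g x v) U := by
    intro v
    have h1 : ContinuousOn (fun x : X => TotalSpace.mk' V.F x (eV.symm x v)) U := by
      refine (eV.continuousOn_symm.comp (Continuous.continuousOn
        (continuous_id.prodMk continuous_const)) ?_)
      exact fun x hx => ⟨hx.1, trivial⟩
    have h2 : ContinuousOn
        (fun x : X => (⟨x, L x (eV.symm x v)⟩ : TotalSpace W.F W.E)) U :=
      hL.comp_continuousOn h1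
    have h3 : ContinuousOn (fun x : X => eW (⟨x, L x (eV.symm x v)⟩ : TotalSpace W.F W.E)) U := by
      refine eW.continuousOn.comp h2 ?_
      intro x hx
      rw [eW.mem_source]
      exact hx.2
    exact (continuous_snd.comp_continuousOn h3)
  -- the matrix of the map in coordinates
  set M : X → Matrix (Fin dd) (Fin dd) ℝ := fun x => Matrix.of fun i j => bW.repr (g x (bV j)) i
    with hM
  have hMc : ContinuousOn (fun x => (M x).det) U := by
    have hMcont : ContinuousOn M U := by
      refine continuousOn_pi.mpr ?_; intro i
      rw [continuousOn_pi]; intro j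
      have : Continuous fun w : W.F => bW.repr w i :=
        (LinearMap.continuous_of_finiteDimensional ((bW.coord i) : W.F →ₗ[ℝ] ℝ))
      exact this.comp_continuousOn (hgx (bV j))
    exact (continuous_id.matrix_det).comp_continuousOn hMcont
  have key : ∀ x ∈ U, (Function.Bijective (L x) ↔ (M x).det ≠ 0) := by
    intro x hx
    -- identify M x with the matrix of the conjugated linear map
    set A : V.F →ₗ[ℝ] W.F :=
      ((eW.continuousLinearEquivAt ℝ x hx.2).toLinearMap.comp
        ((L x : V.E x →ₗ[ℝ] W.E x).comp
          (eV.continuousLinearEquivAt ℝ x hx.1).symm.toLinearMap)) with hA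
    have hMA : M x = LinearMap.toMatrix bV bW A := by
      ext i j
      rw [LinearMap.toMatrix_apply]
      simp only [hM, hA, hg, Matrix.of_apply, LinearMap.coe_comp, Function.comp_apply,
        LinearEquiv.coe_coe, ContinuousLinearEquiv.coe_toLinearEquiv,
        ContinuousLinearMap.coe_coe, Trivialization.continuousLinearEquivAt_apply]
      rfl
    have hbijA : Function.Bijective A ↔ Function.Bijective (L x) := by
      rw [hA]
      simp only [LinearMap.coe_comp, LinearEquiv.coe_coe, ContinuousLinearMap.coe_coe,
        ContinuousLinearEquiv.coe_toLinearEquiv]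
      rw [Function.Bijective.of_comp_iff'
        ((eW.continuousLinearEquivAt ℝ x hx.2).bijective)]
      rw [Function.Bijective.of_comp_iff _
        ((eV.continuousLinearEquivAt ℝ x hx.1).symm.bijective)]
    rw [← hbijA]
    constructor
    · intro hAb
      have hu := (LinearEquiv.ofBijective A hAb).isUnit_det bV bW
      have hcoe : ((LinearEquiv.ofBijective A hAb : V.F ≃ₗ[ℝ] W.F) : V.F →ₗ[ℝ] W.F) = A := rfl
      rw [hcoe] at hu
      rw [hMA]
      exact isUnit_iff_ne_zero.mp hu
    · intro hdet
      have hu : IsUnit ((LinearMap.toMatrix bV bW) A).det := by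
        rw [← hMA]; exact isUnit_iff_ne_zero.mpr hdet
      have h2 : ((LinearEquiv.ofIsUnitDet hu : V.F ≃ₗ[ℝ] W.F) : V.F →ₗ[ℝ] W.F) = A :=
        LinearEquiv.coe_ofIsUnitDet hu
      have h3 := (LinearEquiv.ofIsUnitDet hu).bijective
      rw [← h2]
      exact h3
  refine Filter.mem_of_superset ((hMc.isOpen_inter_preimage hU (isClosed_singleton (x := (0:ℝ))).isOpen_compl).mem_nhds ?_) ?_
  · exact ⟨hx₀U, by simpa using ((key x₀ hx₀U).mp hbij)⟩
  · rintro x ⟨hxU, hdet⟩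
    exact not_not.mpr ((key x hxU).mpr (by simpa using hdet))

end AuxPullback

/-- Let `p` be an odd prime, `X` a closed (`ℤ_p`-orientable) topological
manifold of dimension `n`, `E` and `F` real oriented vector bundles over `X`, and
`L : E → F` an orientation preserving bundle morphism. If the `k`-th Wu classes differ,
`q_k(E) ≠ q_k(F) ∈ H^{2(p-1)k}(X;ℤ_p)`, then the covering dimension of `Σ(L)` is at least
`n - 2(p-1)k` (in particular, for `k = 1`, if `q₁(E) ≠ q₁(F)` then `dim Σ(L) ≥ n - 2(p-1)`).
(The `k`-th Wu class is represented by an `H^{2(p-1)k}(·;ℤ_p)`-valued characteristic class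
`q` for oriented bundles, since its only property used is naturality; `ℤ_p` being a field,
`im β = 0`, so `q_k(E) ≠ q_k(F)` is equivalent to the universal-coefficient condition of
the theorem for oriented bundles.) -/
theorem covDim_ge_of_wu
    (p : ℕ) [Fact p.Prime] (hodd : Odd p)
    (T : GoodTheory (ZMod p) (ZMod p))
    (n : ℕ) (X : Type) [TopologicalSpace X] [T2Space X]
    [ChartedSpace (EuclideanSpace ℝ (Fin n)) X] [CompactSpace X]
    (hor : ROrientable T.toTheory n X)
    (r : ℕ) (V W : OVB X r)
    (L : ∀ x, V.E x →L[ℝ] W.E x) (hL : IsBundleMorphism V.toVB W.toVB L)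
    (hLor : IsOrientPreservingMorphism V W L)
    (k : ℕ) (q : OrientedCharClass T r ((2 * (p - 1) * k : ℕ) : ℤ))
    (hq : q.cls X V ≠ q.cls X W) :
    ((n - 2 * (p - 1) * k : ℕ) : ℕ∞) ≤ covDim ↥(singularSet V.toVB W.toVB L) := by
  by_cases hnm : n ≤ 2 * (p - 1) * k
  · rw [Nat.sub_eq_zero_of_le hnm, Nat.cast_zero]
    exact zero_le
  push_neg at hnm
  set S := singularSet V.toVB W.toVB L with hS
  have hcl : IsClosed S := singularSet_isClosed V.toVB W.toVB L hL
  haveI : CompactSpace ↥S := isCompact_iff_compactSpace.mp hcl.isCompact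
  set d0 : T.Hco X ((2 * (p - 1) * k : ℕ) : ℤ) := q.cls X V - q.cls X W with hd0def
  have hd0 : d0 ≠ 0 := sub_ne_zero.mpr hq
  set ι : C(↥(Sᶜ), X) := ⟨Subtype.val, continuous_subtype_val⟩ with hι
  set V' : OVB (↥(Sᶜ)) r := V.pullbackOVB ι with hV'
  have h1 : q.cls _ V' = T.cmap ι _ (q.cls X V) := by
    refine q.natural _ X V' V ι (fun y => LinearEquiv.refl ℝ (V.E (ι y))) ?_ ?_
    · exact Pullback.continuous_lift V.F V.E ⇑ι
    · intro y
      show (Orientation.map (Fin r) (LinearEquiv.refl ℝ (V.E (ι y)))) (V.ori (ι y))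
        = V.ori (ι y)
      rw [Orientation.map_refl]
      rfl
  have hbij : ∀ y : ↥(Sᶜ), Function.Bijective (L (ι y)) := fun y => not_not.mp y.2
  have h2 : q.cls _ V' = T.cmap ι _ (q.cls X W) := by
    refine q.natural _ X V' W ι
      (fun y => LinearEquiv.ofBijective ((L (ι y) : V.E (ι y) →ₗ[ℝ] W.E (ι y))) (hbij y)) ?_ ?_
    · exact hL.comp (Pullback.continuous_lift V.F V.E ⇑ι)
    · intro y
      show (Orientation.map (Fin r)
          (LinearEquiv.ofBijective ((L (ι y) : V.E (ι y) →ₗ[ℝ] W.E (ι y))) (hbij y)))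
          (V.ori (ι y)) = W.ori (ι y)
      exact hLor.2 (ι y) (hbij y)
  have hrestr : T.cmap ι ((2 * (p - 1) * k : ℕ) : ℤ) d0 = 0 := by
    rw [hd0def, map_sub, ← h1, ← h2, sub_self]
  by_contra hcon
  have hcech : ∀ x : T.Hcech ↥S (((n - 2 * (p - 1) * k : ℕ) : ℤ)), x = 0 := by
    by_contra hne
    push_neg at hne
    obtain ⟨x, hx⟩ := hne
    exact hcon (T.dim_cech ↥S (n - 2 * (p - 1) * k) ⟨x, hx⟩)
  have hidx : (((n - 2 * (p - 1) * k : ℕ)) : ℤ)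
      = (n : ℤ) - ((2 * (p - 1) * k : ℕ) : ℤ) := Nat.cast_sub hnm.le
  rw [hidx] at hcech
  obtain ⟨pdX, pdA, hpd⟩ := T.pd n X hor ((2 * (p - 1) * k : ℕ) : ℤ) S hcl
  have hpi : ∀ ξ : T.Hrel X (∅ : Set X) ((2 * (p - 1) * k : ℕ) : ℤ),
      T.hmap (ContinuousMap.id X) (Set.mapsTo_empty _ _) ((2 * (p - 1) * k : ℕ) : ℤ) ξ
        = (0 : T.Hrel X Sᶜ ((2 * (p - 1) * k : ℕ) : ℤ)) := by
    intro ξ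
    have h := hpd (pdX.symm ξ)
    rw [pdX.apply_symm_apply] at h
    have h0 : T.ccmap (⟨Subtype.val, continuous_subtype_val⟩ : C(↥S, X))
        ((n : ℤ) - ((2 * (p - 1) * k : ℕ) : ℤ)) (pdX.symm ξ) = 0 := hcech _
    rw [← h, h0, map_zero]
  have hpair : T.pair X ((2 * (p - 1) * k : ℕ) : ℤ) d0 = 0 := by
    apply LinearMap.ext
    intro ξ
    obtain ⟨ζ, hζ⟩ := (T.les_exact X S ((2 * (p - 1) * k : ℕ) : ℤ) ξ).mp (hpi ξ)
    rw [LinearMap.zero_apply, ← hζ,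
      ← T.pair_natural ι ((2 * (p - 1) * k : ℕ) : ℤ) d0 ζ, hrestr, map_zero,
      LinearMap.zero_apply]
  obtain ⟨z, hz⟩ := (T.uct_exact X ((2 * (p - 1) * k : ℕ) : ℤ) d0).mp hpair
  have hfree : Module.Free (ZMod p)
      (T.Hrel X (∅ : Set X) (((2 * (p - 1) * k : ℕ) : ℤ) - 1)) :=
    Module.Free.of_divisionRing _ _
  have hzero := T.uct_free X ((2 * (p - 1) * k : ℕ) : ℤ) hfree z
  rw [hz] at hzero
  exact hd0 hzero

end
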